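/- Let l ∈ ℤ₊, r > 1 and C > 0, and let (a_n)_{n∈ℤ} be a family of non-negative real numbers such that a_n ≤ C/(|n|·ω_l^r(n)) for every n ∈ ℤ with n ≠ 0. Then ∫_1^∞ sup{a_n : n ∈ ℤ, t < |n| < 2t} dt < ∞ (with the convention that the supremum over the empty set is 0). -/

import Mathlib

open MeasureTheory Filter Set Topology

/-- Iterated logarithm: `lniter 0 x = 1`, `lniter 1 x = ln(1+x)`,
`lniter (p+1) x = ln(1 + lniter p x)` for `p ≥ 1`. -/
noncomputable def lniter : ℕ → ℝ → ℝ
  | 0, _ => 1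
  | 1, x => Real.log (1 + x)
  | (p + 2), x => Real.log (1 + lniter (p + 1) x)

/-- The weight `ω_l^r(x) := (ln_{l+1}⟨x⟩)^r · ∏_{p=0}^{l} ln_p⟨x⟩`, with `⟨x⟩ = √(x²+1)`
and real exponent `r` (real power). -/
noncomputable def omegaWeight (l : ℕ) (r : ℝ) (x : ℝ) : ℝ :=
  (lniter (l + 1) (Real.sqrt (x ^ 2 + 1))) ^ r *
    ∏ p ∈ Finset.range (l + 1), lniter p (Real.sqrt (x ^ 2 + 1))

lemma lniter_succ_succ (p : ℕ) (x : ℝ) :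
    lniter (p + 2) x = Real.log (1 + lniter (p + 1) x) := rfl

lemma lniter_pos : ∀ (p : ℕ) {x : ℝ}, 1 ≤ x → 0 < lniter p x
  | 0, _, _ => one_pos
  | 1, x, hx => Real.log_pos (by linarith)
  | (p + 2), x, hx => by
      have := lniter_pos (p + 1) hx
      rw [lniter_succ_succ]; exact Real.log_pos (by linarith)

lemma lniter_mono : ∀ (p : ℕ) {x y : ℝ}, 1 ≤ x → x ≤ y → lniter p x ≤ lniter p y
  | 0, _, _, _, _ => le_rfl
  | 1, x, y, hx, hxy => Real.log_le_log (by linarith) (by linarith)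
  | (p + 2), x, y, hx, hxy => by
      have h1 := lniter_mono (p + 1) hx hxy
      have h2 := lniter_pos (p + 1) hx
      rw [lniter_succ_succ, lniter_succ_succ]
      exact Real.log_le_log (by linarith) (by linarith)

lemma lniter_tendsto : ∀ (p : ℕ), Tendsto (lniter (p + 1)) atTop atTop
  | 0 => Real.tendsto_log_atTop.comp (tendsto_atTop_add_const_left _ 1 tendsto_id)
  | (p + 1) =>
      Real.tendsto_log_atTop.comp
        (tendsto_atTop_add_const_left _ 1 (lniter_tendsto p))

noncomputable def sb (t : ℝ) : ℝ := Real.sqrt (t ^ 2 + 1)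

lemma sb_pos (t : ℝ) : 0 < sb t := Real.sqrt_pos.2 (by positivity)

lemma one_le_sb (t : ℝ) : 1 ≤ sb t := by
  rw [show (1:ℝ) = Real.sqrt 1 by simp [Real.sqrt_one]]
  exact Real.sqrt_le_sqrt (by nlinarith [sq_nonneg t])

lemma sqrt_two_le_sb {t : ℝ} (ht : 1 ≤ t) : Real.sqrt 2 ≤ sb t :=
  Real.sqrt_le_sqrt (by nlinarith)

lemma one_le_sqrt_two : (1:ℝ) ≤ Real.sqrt 2 := by
  rw [show (1:ℝ) = Real.sqrt 1 by simp [Real.sqrt_one]]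
  exact Real.sqrt_le_sqrt (by norm_num)

lemma sb_mono {x y : ℝ} (h : x ^ 2 ≤ y ^ 2) : sb x ≤ sb y :=
  Real.sqrt_le_sqrt (by linarith)

lemma sb_tendsto : Tendsto sb atTop atTop := by
  apply tendsto_atTop_mono (fun t => ?_) tendsto_id
  calc id t = t := rfl
  _ ≤ |t| := le_abs_self t
  _ = Real.sqrt (t ^ 2) := (Real.sqrt_sq_eq_abs t).symm
  _ ≤ sb t := Real.sqrt_le_sqrt (by linarith)

lemma hasDerivAt_sb (t : ℝ) : HasDerivAt sb (t / sb t) t := by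
  have h1 : HasDerivAt (fun x : ℝ => x ^ 2 + 1) (2 * t) t := by
    simpa using ((hasDerivAt_pow 2 t).add_const 1)
  have h2 := (Real.hasDerivAt_sqrt (by positivity : t ^ 2 + 1 ≠ 0)).comp t h1
  convert h2 using 1
  · rfl
  · rfl
  · rfl
  rw [sb]
  field_simp

noncomputable def W : ℕ → ℝ → ℝ
  | 0, t => (1 + sb t)⁻¹ * (t / sb t)
  | (p + 1), t => (1 + lniter (p + 1) (sb t))⁻¹ * W p t

lemma hasDerivAt_v : ∀ (p : ℕ) (t : ℝ),
    HasDerivAt (fun x => lniter (p + 1) (sb x)) (W p t) t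
  | 0, t => by
    have h : HasDerivAt (fun x => Real.log (1 + x)) ((1 + sb t)⁻¹) (sb t) := by
      simpa [Function.comp_def] using ((Real.hasDerivAt_log (by simp only [id_eq]; have := sb_pos t; linarith)).comp (sb t)
        ((hasDerivAt_id (sb t)).const_add 1))
    have := h.comp t (hasDerivAt_sb t)
    simpa [lniter, W, Function.comp_def] using this
  | (p + 1), t => by
    have hv := hasDerivAt_v p t
    have hpos := lniter_pos (p + 1) (one_le_sb t)
    have h : HasDerivAt (fun y => Real.log (1 + y)) ((1 + lniter (p + 1) (sb t))⁻¹)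
        (lniter (p + 1) (sb t)) := by
      simpa [Function.comp_def] using ((Real.hasDerivAt_log (by simp only [id_eq]; linarith)).comp (lniter (p + 1) (sb t))
        ((hasDerivAt_id _).const_add 1))
    have := h.comp t hv
    simpa [lniter_succ_succ, W, Function.comp_def] using this

lemma W_nonneg : ∀ (p : ℕ) {t : ℝ}, 0 ≤ t → 0 ≤ W p t
  | 0, t, ht => by
      have h1 := sb_pos t
      exact mul_nonneg (by positivity) (by positivity)
  | (p + 1), t, ht => by
      have h1 := lniter_pos (p + 1) (one_le_sb t)
      have h2 := W_nonneg p ht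
      exact mul_nonneg (by positivity) h2

noncomputable def Kc : ℕ → ℝ
  | 0 => 8
  | (p + 1) => Kc p * ((1 + lniter (p + 1) (Real.sqrt 2)) / lniter (p + 1) (Real.sqrt 2))

lemma Kc_pos : ∀ p, 0 < Kc p
  | 0 => by norm_num [Kc]
  | (p + 1) => by
      have h1 := lniter_pos (p + 1) one_le_sqrt_two
      have h2 := Kc_pos p
      rw [Kc]; positivity

lemma W_lower : ∀ (p : ℕ) {t : ℝ}, 1 ≤ t →
    1 ≤ Kc p * W p t * (t * ∏ q ∈ Finset.range (p + 1), lniter q (sb t))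
  | 0, t, ht => by
      have hs := sb_pos t
      have hs2 : sb t ^ 2 = t ^ 2 + 1 := Real.sq_sqrt (by positivity)
      have hst : sb t ≤ 2 * t := by nlinarith
      have h1s : (1:ℝ) ≤ sb t := one_le_sb t
      rw [show Kc 0 * W 0 t * (t * ∏ q ∈ Finset.range 1, lniter q (sb t))
            = (8 * t * t) / ((1 + sb t) * sb t) by
          rw [Finset.prod_range_one]
          show (8:ℝ) * ((1 + sb t)⁻¹ * (t / sb t)) * (t * 1) = _
          field_simp; try ring]
      rw [le_div_iff₀ (by positivity)]
      nlinarith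
  | (p + 1), t, ht => by
      have ih := W_lower p ht
      set δ := lniter (p + 1) (Real.sqrt 2) with hδ
      set L := lniter (p + 1) (sb t) with hL
      have hδpos : 0 < δ := lniter_pos (p + 1) one_le_sqrt_two
      have hδL : δ ≤ L := lniter_mono (p + 1) one_le_sqrt_two (sqrt_two_le_sb ht)
      have hLpos : (0:ℝ) < L := lniter_pos (p + 1) (one_le_sb t)
      have key : (1:ℝ) ≤ (1 + δ) / δ * ((1 + L)⁻¹ * L) := by
        rw [show (1 + δ) / δ * ((1 + L)⁻¹ * L) = ((1 + δ) * L) / (δ * (1 + L)) by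
          field_simp]
        rw [le_div_iff₀ (mul_pos hδpos (by linarith))]
        nlinarith
      have heq : Kc (p + 1) * W (p + 1) t *
            (t * ∏ q ∈ Finset.range (p + 2), lniter q (sb t))
          = (Kc p * W p t * (t * ∏ q ∈ Finset.range (p + 1), lniter q (sb t))) *
            ((1 + δ) / δ * ((1 + L)⁻¹ * L)) := by
        rw [Finset.prod_range_succ]
        show Kc p * ((1 + δ) / δ) * ((1 + L)⁻¹ * W p t) * _ = _
        ring
      rw [heq]
      calc (1:ℝ) = 1 * 1 := by ring
      _ ≤ _ := mul_le_mul ih key zero_le_one (by linarith)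

/-- If `a_n ≤ C/(|n|·ω_l^r(n))` for all `n ≠ 0`, with `r > 1`, then
`∫_1^∞ sup{a_n : t < |n| < 2t} dt < ∞`. The supremum over the empty set is `0`. -/
theorem integral_sup_window_finite_of_log_decay
    (l : ℕ) (r : ℝ) (hr : 1 < r) (C : ℝ) (hC : 0 < C)
    (a : ℤ → ℝ) (ha : ∀ n, 0 ≤ a n)
    (hbound : ∀ n : ℤ, n ≠ 0 → a n ≤ C / (|(n : ℝ)| * omegaWeight l r (n : ℝ))) :
    ∫⁻ t in Set.Ici (1 : ℝ),
        ENNReal.ofReal (⨆ n ∈ {n : ℤ | t < |(n : ℝ)| ∧ |(n : ℝ)| < 2 * t}, a n) < ⊤ := by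
  set u : ℝ → ℝ := fun t => lniter (l + 1) (sb t) with hu
  set P : ℝ → ℝ := fun t => ∏ p ∈ Finset.range (l + 1), lniter p (sb t) with hP
  have hupos : ∀ t : ℝ, 0 < u t := fun t => lniter_pos (l + 1) (one_le_sb t)
  have hPpos : ∀ t : ℝ, 0 < P t := fun t =>
    Finset.prod_pos fun p _ => lniter_pos p (one_le_sb t)
  have homega : ∀ x : ℝ, omegaWeight l r x = u x ^ r * P x := fun x => rfl
  have homegapos : ∀ x : ℝ, 0 < omegaWeight l r x := fun x => by
    rw [homega]
    exact mul_pos (Real.rpow_pos_of_pos (hupos x) r) (hPpos x)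
  -- the derivative function
  set g' : ℝ → ℝ := fun t => u t ^ (-r) * W l t with hg'
  have hderiv : ∀ t : ℝ, HasDerivAt (fun x => -(r - 1)⁻¹ * (u x ^ (1 - r))) (g' t) t := by
    intro t
    have h1 : HasDerivAt (fun y : ℝ => y ^ (1 - r)) ((1 - r) * u t ^ (1 - r - 1)) (u t) :=
      Real.hasDerivAt_rpow_const (Or.inl (ne_of_gt (hupos t)))
    have h2 := (h1.comp t (hasDerivAt_v l t)).const_mul (-(r - 1)⁻¹)
    convert h2 using 1
    · rfl
    · rfl
    · rfl
    rw [hg']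
    have : (1:ℝ) - r - 1 = -r := by ring
    rw [this]
    have hr0 : r - 1 ≠ 0 := by linarith
    field_simp
    ring
  have hg'nonneg : ∀ t : ℝ, 0 < t → 0 ≤ g' t := fun t ht =>
    mul_nonneg (Real.rpow_nonneg (hupos t).le _) (W_nonneg l ht.le)
  have htends : Tendsto (fun x => -(r - 1)⁻¹ * (u x ^ (1 - r))) atTop (𝓝 0) := by
    have hu_t : Tendsto u atTop atTop := (lniter_tendsto l).comp sb_tendsto
    have h0 : Tendsto (fun x => u x ^ (1 - r)) atTop (𝓝 0) := by
      have := (tendsto_rpow_neg_atTop (show (0:ℝ) < r - 1 by linarith)).comp hu_t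
      simpa [neg_sub, Function.comp_def] using this
    simpa using h0.const_mul (-(r - 1)⁻¹)
  have hInt : IntegrableOn g' (Set.Ioi (1:ℝ)) :=
    integrableOn_Ioi_deriv_of_nonneg' (fun x _ => hderiv x)
      (fun x hx => hg'nonneg x (by simp at hx; linarith)) htends
  -- pointwise bound
  have hbd : ∀ t : ℝ, t ∈ Set.Ici (1:ℝ) →
      (⨆ n ∈ {n : ℤ | t < |(n : ℝ)| ∧ |(n : ℝ)| < 2 * t}, a n) ≤ C * Kc l * g' t := by
    intro t ht
    simp only [Set.mem_Ici] at ht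
    have hg'n : 0 ≤ g' t := hg'nonneg t (by linarith)
    have hBnn : 0 ≤ C * Kc l * g' t := by
      have := Kc_pos l; positivity
    refine Real.iSup_le (fun n => Real.iSup_le (fun hn => ?_) hBnn) hBnn
    obtain ⟨hn1, hn2⟩ := hn
    have hnabs : (1:ℝ) < |(n:ℝ)| := lt_of_le_of_lt ht hn1
    have hn0 : n ≠ 0 := by
      intro h; rw [h] at hnabs; simp at hnabs; linarith
    have hsb : sb t ≤ sb (n:ℝ) := sb_mono (by
      have h1 : t ^ 2 ≤ |(n:ℝ)| ^ 2 := by nlinarith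
      rw [sq_abs] at h1; exact h1)
    have humono : u t ≤ u (n:ℝ) := lniter_mono (l + 1) (one_le_sb t) hsb
    have hPmono : P t ≤ P (n:ℝ) :=
      Finset.prod_le_prod (fun p _ => (lniter_pos p (one_le_sb t)).le)
        (fun p _ => lniter_mono p (one_le_sb t) hsb)
    have homono : omegaWeight l r t ≤ omegaWeight l r (n:ℝ) := by
      rw [homega, homega]
      exact mul_le_mul (Real.rpow_le_rpow (hupos t).le humono (by linarith))
        hPmono (hPpos t).le (Real.rpow_nonneg (hupos (n:ℝ)).le r)
    have hprodpos : 0 < t * omegaWeight l r t :=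
      mul_pos (by linarith) (homegapos t)
    have hstep1 : a n ≤ C / (t * omegaWeight l r t) := by
      refine (hbound n hn0).trans ?_
      apply div_le_div_of_nonneg_left hC.le hprodpos
      exact mul_le_mul hn1.le homono (homegapos t).le (by positivity)
    refine hstep1.trans ?_
    -- C / (t ω t) ≤ C * Kc l * g' t
    have hinv : (t * P t)⁻¹ ≤ Kc l * W l t := by
      have hW := W_lower l ht
      have htP : 0 < t * P t := mul_pos (by linarith) (hPpos t)
      calc (t * P t)⁻¹ = (t * P t)⁻¹ * 1 := by ring
      _ ≤ (t * P t)⁻¹ * (Kc l * W l t * (t * P t)) := by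
          exact mul_le_mul_of_nonneg_left hW (by positivity)
      _ = Kc l * W l t := by have := (hPpos t).ne'; field_simp
    have heq2 : C / (t * omegaWeight l r t) = (C * u t ^ (-r)) * (t * P t)⁻¹ := by
      rw [homega, Real.rpow_neg (hupos t).le]
      have h1 : u t ^ r ≠ 0 := ne_of_gt (Real.rpow_pos_of_pos (hupos t) r)
      field_simp
    rw [heq2]
    calc (C * u t ^ (-r)) * (t * P t)⁻¹ ≤ (C * u t ^ (-r)) * (Kc l * W l t) := by
          exact mul_le_mul_of_nonneg_left hinv
            (mul_nonneg hC.le (Real.rpow_nonneg (hupos t).le _))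
    _ = C * Kc l * g' t := by rw [hg']; ring
  -- conclude
  calc ∫⁻ t in Set.Ici (1:ℝ),
        ENNReal.ofReal (⨆ n ∈ {n : ℤ | t < |(n : ℝ)| ∧ |(n : ℝ)| < 2 * t}, a n)
      ≤ ∫⁻ t in Set.Ici (1:ℝ), ENNReal.ofReal (C * Kc l * g' t) := by
        refine lintegral_mono_ae ?_
        filter_upwards [ae_restrict_mem measurableSet_Ici] with t ht
        exact ENNReal.ofReal_le_ofReal (hbd t ht)
  _ = ∫⁻ t in Set.Ioi (1:ℝ), ENNReal.ofReal (C * Kc l * g' t) :=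
        (setLIntegral_congr Ioi_ae_eq_Ici).symm
  _ ≤ ∫⁻ t in Set.Ioi (1:ℝ), ‖C * Kc l * g' t‖₊ :=
        lintegral_mono fun t => Real.ofReal_le_enorm _
  _ < ⊤ := (hInt.const_mul (C * Kc l)).2
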